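/- Let G be a finite connected simple graph of order n such that 2·τ(G) > n, and let W be its (unique) twin class of cardinality τ(G). If the subgraph of G induced by W is empty (edgeless), then β_p(G) = τ(G). -/

import Mathlib

open Classical SimpleGraph

noncomputable section

/-- The distance from a vertex to a set of vertices. -/
def setDist {V : Type*} (G : SimpleGraph V) (u : V) (S : Set V) : ℕ :=
  sInf ((G.dist u) '' S)

/-- A locating partition of a graph: a partition of the vertex set such that every
vertex is uniquely determined by its vector of distances to the parts. -/
def IsLocatingPartition {V : Type*} (G : SimpleGraph V) (P : Set (Set V)) : Prop :=
  Setoid.IsPartition P ∧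
    ∀ u v : V, (∀ S ∈ P, setDist G u S = setDist G v S) → u = v

/-- The partition dimension: the minimum cardinality of a locating partition. -/
def partitionDim {V : Type*} (G : SimpleGraph V) : ℕ :=
  sInf {k | ∃ P : Set (Set V), IsLocatingPartition G P ∧ P.ncard = k}

/-- Two vertices are twins if they have the same neighbors other than themselves. -/
def IsTwin {V : Type*} (G : SimpleGraph V) (u v : V) : Prop :=
  G.neighborSet u \ {v} = G.neighborSet v \ {u}

/-- The twin class of a vertex. -/
def twinClass {V : Type*} (G : SimpleGraph V) (u : V) : Set V :=
  {v | IsTwin G u v}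

/-- The twin number: the maximum cardinality of a twin class. -/
def twinNumber {V : Type*} (G : SimpleGraph V) : ℕ :=
  sSup {k | ∃ u : V, (twinClass G u).ncard = k}

section AuxLemmas

variable {V : Type*}

lemma isTwin_refl (G : SimpleGraph V) (u : V) : IsTwin G u u := rfl

lemma isTwin_symm {G : SimpleGraph V} {u v : V} (h : IsTwin G u v) : IsTwin G v u := h.symm

lemma isTwin_iff_adj (G : SimpleGraph V) (u v : V) :
    IsTwin G u v ↔ ∀ a, a ≠ u → a ≠ v → (G.Adj u a ↔ G.Adj v a) := by
  constructor
  · intro h a hau hav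
    constructor
    · intro hadj
      have h1 : a ∈ G.neighborSet u \ {v} := ⟨hadj, hav⟩
      rw [h] at h1; exact h1.1
    · intro hadj
      have h1 : a ∈ G.neighborSet v \ {u} := ⟨hadj, hau⟩
      rw [← h] at h1; exact h1.1
  · intro h
    ext a
    simp only [Set.mem_diff, SimpleGraph.mem_neighborSet, Set.mem_singleton_iff]
    constructor
    · rintro ⟨hadj, hav⟩
      have hau : a ≠ u := fun h' => G.loopless.irrefl u (h' ▸ hadj)
      exact ⟨(h a hau hav).mp hadj, hau⟩
    · rintro ⟨hadj, hau⟩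
      have hav : a ≠ v := fun h' => G.loopless.irrefl v (h' ▸ hadj)
      exact ⟨(h a hau hav).mpr hadj, hav⟩

lemma isTwin_trans {G : SimpleGraph V} {u v x : V}
    (h1 : IsTwin G u v) (h2 : IsTwin G v x) : IsTwin G u x := by
  rcases eq_or_ne u v with rfl | huv; · exact h2
  rcases eq_or_ne v x with rfl | hvx; · exact h1
  rcases eq_or_ne u x with rfl | hux; · exact isTwin_refl G u
  rw [isTwin_iff_adj] at h1 h2 ⊢
  intro a hau hax
  by_cases hav : a = v
  · subst hav
    constructor
    · intro h
      have h3 : G.Adj u x := ((h2 u huv hux).mp h.symm).symm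
      exact ((h1 x (Ne.symm hux) (Ne.symm hax)).mp h3).symm
    · intro h
      have h3 : G.Adj x u := ((h1 x (Ne.symm hux) (Ne.symm hax)).mpr h.symm).symm
      exact ((h2 u huv hux).mpr h3).symm
  · exact (h1 a hau hav).trans (h2 a hav hax)

lemma exists_adj_of_connected {G : SimpleGraph V} (hG : G.Connected) {u v : V} (h : u ≠ v) :
    ∃ a, G.Adj u a := by
  obtain ⟨p, hp⟩ := hG.exists_walk_length_eq_dist u v
  cases p with
  | nil => exact absurd rfl h
  | cons had q => exact ⟨_, had⟩

lemma isTwin_dist_le {G : SimpleGraph V} (hG : G.Connected) {u v x : V}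
    (h : IsTwin G u v) (hxu : x ≠ u) (hxv : x ≠ v) : G.dist v x ≤ G.dist u x := by
  obtain ⟨p, hp⟩ := hG.exists_walk_length_eq_dist u x
  cases p with
  | nil => exact absurd rfl hxu
  | cons had q =>
    rename_i b
    by_cases hbv : b = v
    · calc G.dist v x ≤ q.length := hbv ▸ SimpleGraph.dist_le q
        _ ≤ (SimpleGraph.Walk.cons had q).length := by
            rw [SimpleGraph.Walk.length_cons]; omega
        _ = G.dist u x := hp
    · have hadj : G.Adj v b := by
        have h1 : b ∈ G.neighborSet u \ {v} := ⟨had, hbv⟩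
        rw [h] at h1; exact h1.1
      calc G.dist v x ≤ (SimpleGraph.Walk.cons hadj q).length := SimpleGraph.dist_le _
        _ = (SimpleGraph.Walk.cons had q).length := by
            rw [SimpleGraph.Walk.length_cons, SimpleGraph.Walk.length_cons]
        _ = G.dist u x := hp

lemma isTwin_dist {G : SimpleGraph V} (hG : G.Connected) {u v x : V}
    (h : IsTwin G u v) (hxu : x ≠ u) (hxv : x ≠ v) : G.dist u x = G.dist v x :=
  le_antisymm (isTwin_dist_le hG (isTwin_symm h) hxv hxu) (isTwin_dist_le hG h hxu hxv)

lemma setDist_singleton (G : SimpleGraph V) (u a : V) : setDist G u {a} = G.dist u a := by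
  simp [setDist]

lemma setDist_pair (G : SimpleGraph V) (u a b : V) :
    setDist G u {a, b} = min (G.dist u a) (G.dist u b) := by
  rw [setDist, Set.image_pair, csInf_pair]

lemma setDist_eq_zero_of_mem {G : SimpleGraph V} {u : V} {S : Set V} (h : u ∈ S) :
    setDist G u S = 0 :=
  Nat.eq_zero_of_le_zero (Nat.sInf_le ⟨u, h, SimpleGraph.dist_self⟩)

lemma mem_of_setDist_eq_zero {G : SimpleGraph V} (hG : G.Connected) {u : V} {S : Set V}
    (hS : S.Nonempty) (h : setDist G u S = 0) : u ∈ S := by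
  rw [setDist, Nat.sInf_eq_zero] at h
  rcases h with h | h
  · obtain ⟨x, hxS, hx⟩ := h
    rwa [hG.dist_eq_zero_iff.mp hx]
  · exact absurd (Set.image_eq_empty.mp h) hS.ne_empty

end AuxLemmas

/-- For a connected graph `G` of order `n` with `2·τ(G) > n`, if the twin class
`W` of maximum cardinality induces an edgeless subgraph, then `β_p(G) = τ(G)`. -/
theorem partitionDim_eq_twinNumber_of_indep {V : Type*} [Fintype V]
    (G : SimpleGraph V) (hG : G.Connected) (n : ℕ) (hn : Fintype.card V = n)
    (hτ : n < 2 * twinNumber G)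
    (W : Set V) (hW : ∃ u : V, W = twinClass G u)
    (hWcard : W.ncard = twinNumber G)
    (hindep : ∀ u ∈ W, ∀ v ∈ W, ¬ G.Adj u v) :
    partitionDim G = twinNumber G := by
  obtain ⟨u₀, hWdef⟩ := hW
  have hτpos : 0 < twinNumber G := by omega
  have hWfin : W.Finite := Set.toFinite W
  have hWne : W.Nonempty := (Set.ncard_pos hWfin).mp (by rw [hWcard]; exact hτpos)
  have hmemW : ∀ x, x ∈ W ↔ IsTwin G u₀ x := by intro x; rw [hWdef]; rfl
  have htwinW : ∀ w ∈ W, ∀ w' ∈ W, IsTwin G w w' := by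
    intro w hw w' hw'
    exact isTwin_trans (isTwin_symm ((hmemW w).mp hw)) ((hmemW w').mp hw')
  have hWclosed : ∀ w ∈ W, ∀ x, IsTwin G w x → x ∈ W := by
    intro w hw x ht
    exact (hmemW x).mpr (isTwin_trans ((hmemW w).mp hw) ht)
  have hdistW : ∀ w ∈ W, ∀ w' ∈ W, w ≠ w' → G.dist w w' = 2 := by
    intro w hw w' hw' hne
    obtain ⟨a, ha⟩ := exists_adj_of_connected hG hne
    have haw' : a ≠ w' := fun h => hindep w hw w' hw' (h ▸ ha)
    have ha' : G.Adj w' a :=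
      ((isTwin_iff_adj G w w').mp (htwinW w hw w' hw') a
        (fun h => G.loopless.irrefl w (h ▸ ha)) haw').mp ha
    have h2 : G.dist w w' ≤ 2 := by
      have := SimpleGraph.dist_le
        (SimpleGraph.Walk.cons ha (SimpleGraph.Walk.cons ha'.symm SimpleGraph.Walk.nil))
      simpa using this
    have h0 : G.dist w w' ≠ 0 := fun h => hne (hG.dist_eq_zero_iff.mp h)
    have h1 : G.dist w w' ≠ 1 := fun h =>
      hindep w hw w' hw' (SimpleGraph.dist_eq_one_iff_adj.mp h)
    omega
  have hunif : ∀ x w w', w ∈ W → w' ∈ W → x ∉ W → G.dist x w = G.dist x w' := by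
    intro x w w' hw hw' hx
    rcases eq_or_ne w w' with rfl | hne; · rfl
    rw [SimpleGraph.dist_comm, SimpleGraph.dist_comm (u := x) (v := w')]
    exact isTwin_dist hG (htwinW w hw w' hw')
      (fun h => hx (by rw [h]; exact hw)) (fun h => hx (by rw [h]; exact hw'))
  -- lower bound
  have hlow : ∀ k ∈ {k | ∃ P : Set (Set V), IsLocatingPartition G P ∧ P.ncard = k},
      twinNumber G ≤ k := by
    rintro k ⟨P, ⟨hpart, hloc⟩, rfl⟩
    choose f hfP hfmem using fun w : V => (hpart.2 w).exists
    have huniq : ∀ (w : V) (S : Set V), S ∈ P → w ∈ S → S = f w := by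
      intro w S hS hwS
      exact (hpart.2 w).unique ⟨hS, hwS⟩ ⟨hfP w, hfmem w⟩
    have hinj : Set.InjOn f W := by
      intro w hw w' hw' hff
      refine hloc w w' fun S hS => ?_
      by_cases hwS : w ∈ S
      · have h1 : S = f w := huniq w S hS hwS
        have hw'S : w' ∈ S := by rw [h1, hff]; exact hfmem w'
        rw [setDist_eq_zero_of_mem hwS, setDist_eq_zero_of_mem hw'S]
      · have hw'S : w' ∉ S := by
          intro h
          exact hwS (by rw [huniq w' S hS h, ← hff]; exact hfmem w)
        unfold setDist
        congr 1
        apply Set.image_congr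
        intro t ht
        exact isTwin_dist hG (htwinW w hw w' hw')
          (fun h => hwS (by rw [← h]; exact ht)) (fun h => hw'S (by rw [← h]; exact ht))
    calc twinNumber G = W.ncard := hWcard.symm
      _ = (f '' W).ncard := (Set.ncard_image_of_injOn hinj).symm
      _ ≤ P.ncard := Set.ncard_le_ncard (Set.image_subset_iff.mpr fun w _ => hfP w) P.toFinite
  -- upper bound construction
  obtain ⟨w₀, hw₀⟩ := hWne
  have hcompl : W.ncard + Wᶜ.ncard = n := by
    rw [← hn, ← Nat.card_eq_fintype_card]; exact Set.ncard_add_ncard_compl W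
  have hdiffcard : (W \ {w₀}).ncard = W.ncard - 1 := Set.ncard_diff_singleton_of_mem hw₀
  have hle : Wᶜ.ncard ≤ (W \ {w₀}).ncard := by
    rw [hdiffcard]; omega
  have hcard : Nat.card ↥(Wᶜ) ≤ Nat.card ↥(W \ {w₀}) := by
    rw [Nat.card_coe_set_eq, Nat.card_coe_set_eq]; exact hle
  rw [Nat.card_eq_fintype_card, Nat.card_eq_fintype_card] at hcard
  obtain ⟨ι⟩ := Function.Embedding.nonempty_of_card_le hcard
  set g : V → V := fun v => if h : v ∈ W then v else (ι ⟨v, h⟩ : ↥(W \ {w₀})).1 with hgdef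
  have hgid : ∀ v ∈ W, g v = v := by intro v hv; simp only [hgdef]; rw [dif_pos hv]
  have hgmem : ∀ v, v ∉ W → g v ∈ W \ {w₀} := by
    intro v hv
    simp only [hgdef]; rw [dif_neg hv]; exact (ι ⟨v, hv⟩).2
  have hgW : ∀ v, g v ∈ W := by
    intro v
    by_cases h : v ∈ W
    · rw [hgid v h]; exact h
    · exact (hgmem v h).1
  have hginj : ∀ a b, a ∉ W → b ∉ W → g a = g b → a = b := by
    intro a b ha hb hab
    simp only [hgdef] at hab
    rw [dif_neg ha, dif_neg hb] at hab
    exact Subtype.ext_iff.mp (ι.injective (Subtype.ext hab))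
  set part : V → Set V := fun w => {x | g x = w} with hpartdef
  set P : Set (Set V) := part '' W with hPdef
  have hself : ∀ v, v ∈ part (g v) := fun v => rfl
  have hmempart : ∀ {x w : V}, x ∈ part w ↔ g x = w := Iff.rfl
  have hPpart : Setoid.IsPartition P := by
    constructor
    · rintro ⟨w, hwW, hempty⟩
      have hmem : w ∈ part w := hmempart.mpr (hgid w hwW)
      rw [hempty] at hmem; exact hmem
    · intro a
      refine ⟨part (g a), ⟨⟨g a, hgW a, rfl⟩, hself a⟩, ?_⟩
      rintro S ⟨⟨w, hwW, rfl⟩, haS⟩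
      rw [show g a = w from haS]
  have hinjpart : Set.InjOn part W := by
    intro w hw w' hw' he
    have h1 : w ∈ part w' := he ▸ hmempart.mpr (hgid w hw)
    rw [hmempart, hgid w hw] at h1; exact h1
  have hPτ : P.ncard = twinNumber G := by
    rw [hPdef, Set.ncard_image_of_injOn hinjpart, hWcard]
  have hzero : ∀ (x w : V), w ∈ W → setDist G x (part w) = 0 → x ∈ part w := by
    intro x w hw h
    exact mem_of_setDist_eq_zero hG ⟨w, hmempart.mpr (hgid w hw)⟩ h
  have key : ∀ w x, w ∈ W → x ∉ W → g x = w →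
      (∀ S ∈ P, setDist G w S = setDist G x S) → False := by
    intro w x hw hx hgx hall
    have hwne₀ : w ≠ w₀ := by
      intro h
      exact (hgmem x hx).2 (by rw [Set.mem_singleton_iff, hgx, h])
    have hpw₀ : part w₀ = {w₀} := by
      ext y
      rw [hmempart, Set.mem_singleton_iff]
      constructor
      · intro hy
        by_cases hyW : y ∈ W
        · rw [← hgid y hyW]; exact hy
        · exact absurd (Set.mem_singleton_iff.mpr hy) (hgmem y hyW).2
      · intro h; rw [h]; exact hgid w₀ hw₀
    have hPw₀ : part w₀ ∈ P := ⟨w₀, hw₀, rfl⟩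
    have hx2 : G.dist x w₀ = 2 := by
      have h1 := hall (part w₀) hPw₀
      rw [hpw₀, setDist_singleton, setDist_singleton] at h1
      rw [← h1]
      exact hdistW w hw w₀ hw₀ hwne₀
    have hxW2 : ∀ w' ∈ W, G.dist x w' = 2 := by
      intro w' hw'
      rw [hunif x w' w₀ hw' hw₀ hx]; exact hx2
    have hxadj : ∀ a, a ∉ W → a ≠ x → (G.Adj w a ↔ G.Adj x a) := by
      intro a haW hax
      have hgaW : g a ∈ W := hgW a
      have hganew : g a ≠ w := fun h => hax (hginj a x haW hx (h.trans hgx.symm))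
      have hpga : part (g a) = {g a, a} := by
        ext y
        rw [hmempart]
        simp only [Set.mem_insert_iff, Set.mem_singleton_iff]
        constructor
        · intro hy
          by_cases hyW : y ∈ W
          · left; rw [← hgid y hyW]; exact hy
          · right; exact hginj y a hyW haW hy
        · rintro (rfl | rfl)
          · exact hgid (g a) hgaW
          · rfl
      have hPga : part (g a) ∈ P := ⟨g a, hgaW, rfl⟩
      have e3 : setDist G w (part (g a)) = min 2 (G.dist w a) := by
        rw [hpga, setDist_pair, hdistW w hw (g a) hgaW (Ne.symm hganew)]
      have e4 : setDist G x (part (g a)) = min 2 (G.dist x a) := by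
        rw [hpga, setDist_pair, hxW2 (g a) hgaW]
      have heq := hall _ hPga
      rw [e3, e4] at heq
      have hwa0 : G.dist w a ≠ 0 := fun h => haW (by rw [← hG.dist_eq_zero_iff.mp h]; exact hw)
      have hxa0 : G.dist x a ≠ 0 := fun h => hax ((hG.dist_eq_zero_iff.mp h)).symm
      rw [← SimpleGraph.dist_eq_one_iff_adj, ← SimpleGraph.dist_eq_one_iff_adj]
      omega
    have htwin : IsTwin G w x := by
      rw [isTwin_iff_adj]
      intro a haw hax
      by_cases haW : a ∈ W
      · constructor
        · intro h; exact absurd h (hindep w hw a haW)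
        · intro h
          have h1 : G.dist x a = 1 := SimpleGraph.dist_eq_one_iff_adj.mpr h
          have h2 := hxW2 a haW
          omega
      · exact hxadj a haW hax
    exact hx (hWclosed w hw x htwin)
  have hloc : IsLocatingPartition G P := by
    refine ⟨hPpart, ?_⟩
    intro a b hall
    by_contra hne
    have h0 : setDist G b (part (g a)) = 0 := by
      rw [← hall (part (g a)) ⟨g a, hgW a, rfl⟩]
      exact setDist_eq_zero_of_mem (hself a)
    have hb : g b = g a := hzero b (g a) (hgW a) h0
    by_cases haW : a ∈ W
    · by_cases hbW : b ∈ W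
      · exact hne ((hgid a haW).symm.trans (hb.symm.trans (hgid b hbW)))
      · exact key a b haW hbW (hb.trans (hgid a haW)) hall
    · by_cases hbW : b ∈ W
      · exact key b a hbW haW (hb.symm.trans (hgid b hbW)) (fun S hS => (hall S hS).symm)
      · exact hne (hginj a b haW hbW hb.symm)
  have hmem : twinNumber G ∈
      {k | ∃ P : Set (Set V), IsLocatingPartition G P ∧ P.ncard = k} := ⟨P, hloc, hPτ⟩
  exact le_antisymm (Nat.sInf_le hmem) (le_csInf ⟨_, hmem⟩ hlow)
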